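/- arXiv:2510.26587 — 2 statements merged into one kernel-verified Lean document; each statement's English description precedes it below -/
import Mathlib

section
/- Let T = Σ uᵢ⊗vᵢ⊗wᵢ be a tensor in K^{m×n×p} such that the uᵢ are linearly independent, the vᵢ are linearly independent, and every wᵢ is nonzero. Then rank(T) = r and T has a unique matrix-vector decomposition of rank r (uniqueness up to permutation of the terms M_ℓ ⊗ w_ℓ and rescaling within each term). -/
open Matrix BigOperators Polynomial

variable {K : Type*} [Field K]

/-- Tensor rank: smallest `r` such that `T` is a sum of `r` rank-one tensors. -/
noncomputable def tensorRank {m n p : ℕ} (T : Fin m → Fin n → Fin p → K) : ℕ :=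
  sInf {r | ∃ (u : Fin r → Fin m → K) (v : Fin r → Fin n → K) (w : Fin r → Fin p → K),
    T = fun a b c => ∑ i, u i a * v i b * w i c}

/-- Matrix-vector decomposition: `T = ∑ M ℓ ⊗ w ℓ` with nonzero matrices,
nonzero and pairwise non-collinear vectors. -/
def IsMVDecomp {m n p q : ℕ} (T : Fin m → Fin n → Fin p → K)
    (M : Fin q → Matrix (Fin m) (Fin n) K) (w : Fin q → Fin p → K) : Prop :=
  (∀ ℓ, M ℓ ≠ 0) ∧ (∀ ℓ, w ℓ ≠ 0) ∧
  (∀ ℓ ℓ' : Fin q, ℓ ≠ ℓ' → ∀ c : K, w ℓ' ≠ c • w ℓ) ∧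
  T = fun a b c => ∑ ℓ, M ℓ a b * w ℓ c

/-- Column space of a matrix. -/
noncomputable def colSpace {m n : ℕ} (M : Matrix (Fin m) (Fin n) K) :
    Submodule K (Fin m → K) := LinearMap.range M.mulVecLin

/-- A finite family of subspaces is in direct sum. -/
def DirectSumFamily {q : ℕ} {W : Type*} [AddCommGroup W] [Module K W]
    (E : Fin q → Submodule K W) : Prop :=
  ∀ x : Fin q → W, (∀ ℓ, x ℓ ∈ E ℓ) → (∑ ℓ, x ℓ) = 0 → ∀ ℓ, x ℓ = 0

/-- The 3-slices of an order-3 tensor. -/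
def slice3 {m n p : ℕ} (T : Fin m → Fin n → Fin p → K) (k : Fin p) :
    Matrix (Fin m) (Fin n) K := fun i j => T i j k

section AuxLemmas

open Finset Submodule Module

lemma exists_good_functional {p : ℕ} {ι : Type*} [Fintype ι] [Infinite K]
    (z : ι → Fin p → K) (hz : ∀ j, z j ≠ 0) :
    ∃ φ : Fin p → K, ∀ j, ∑ k, z j k * φ k ≠ 0 := by
  classical
  suffices h : ∀ s : Finset ι, ∃ φ : Fin p → K, ∀ j ∈ s, ∑ k, z j k * φ k ≠ 0 by
    obtain ⟨φ, hφ⟩ := h Finset.univ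
    exact ⟨φ, fun j => hφ j (mem_univ j)⟩
  intro s
  induction s using Finset.induction_on with
  | empty => exact ⟨0, by simp⟩
  | @insert a s ha ih =>
    obtain ⟨φ, hφ⟩ := ih
    obtain ⟨k₀, hk₀⟩ : ∃ k, z a k ≠ 0 := by
      by_contra h; push_neg at h; exact hz a (funext h)
    set ψ : Fin p → K := Pi.single k₀ 1 with hψdef
    have hψa : ∑ k, z a k * ψ k = z a k₀ := by
      simp [hψdef, Pi.single_apply, mul_ite, Finset.sum_ite_eq']
    set α : ι → K := fun j => ∑ k, z j k * φ k with hα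
    set β : ι → K := fun j => ∑ k, z j k * ψ k with hβ
    obtain ⟨t, ht⟩ := Infinite.exists_notMem_finset
      ((insert a s).image fun j => -α j / β j)
    refine ⟨fun k => φ k + t * ψ k, ?_⟩
    intro j hj
    have hsum : ∑ k, z j k * (φ k + t * ψ k) = α j + t * β j := by
      rw [hα, hβ, Finset.mul_sum, ← Finset.sum_add_distrib]
      exact Finset.sum_congr rfl fun k _ => by ring
    rw [hsum]
    by_cases hb : β j = 0
    · have hja : j ≠ a := by
        rintro rfl
        rw [hβ] at hb; simp only at hb
        rw [hψa] at hb; exact hk₀ hb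
      have hjs : j ∈ s := by
        rcases Finset.mem_insert.mp hj with h | h
        · exact absurd h hja
        · exact h
      rw [hb, mul_zero, add_zero]
      exact hφ j hjs
    · intro hzero
      apply ht
      apply Finset.mem_image.mpr
      refine ⟨j, hj, ?_⟩
      rw [div_eq_iff hb]
      linear_combination -hzero
variable {K : Type*} [Field K]

lemma exists_dual_family {n r : ℕ} {v : Fin r → Fin n → K} (hv : LinearIndependent K v) :
    ∃ x : Fin r → Fin n → K, ∀ i j, ∑ b, v i b * x j b = if i = j then 1 else 0 := by
  classical
  set V : Matrix (Fin r) (Fin n) K := Matrix.of fun i b => v i b with hV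
  have hrank : V.rank = r := by
    rw [← Matrix.rank_transpose, Matrix.rank_eq_finrank_span_cols]
    have : (Vᵀᵀ : Matrix (Fin r) (Fin n) K) = V := Matrix.transpose_transpose V
    show finrank K (Submodule.span K (Set.range (V : Fin r → Fin n → K))) = r
    have : Set.range (V : Fin r → Fin n → K) = Set.range v := rfl
    rw [this, finrank_span_eq_card hv, Fintype.card_fin]
  have hsurj : Function.Surjective V.mulVecLin := by
    rw [← LinearMap.range_eq_top]
    apply Submodule.eq_top_of_finrank_eq
    show V.rank = _
    rw [hrank, finrank_pi]
    simp
  refine ⟨fun j => (hsurj (Pi.single j 1)).choose, fun i j => ?_⟩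
  have h := (hsurj (Pi.single j 1)).choose_spec
  have := congrFun h i
  rw [Matrix.mulVecLin_apply] at this
  simpa [Matrix.mulVec, dotProduct, Pi.single_apply, V, eq_comm] using this


lemma mulVec_weighted {m n r : ℕ} (u : Fin r → Fin m → K) (v : Fin r → Fin n → K)
    (s : Finset (Fin r)) (c : Fin r → K) (x : Fin n → K) :
    (Matrix.of fun a b => ∑ i ∈ s, c i * (u i a * v i b)) *ᵥ x
      = ∑ i ∈ s, (c i * ∑ b, v i b * x b) • u i := by
  funext a
  rw [Finset.sum_apply]
  simp only [Matrix.mulVec, dotProduct, Matrix.of_apply, Pi.smul_apply, smul_eq_mul]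
  calc ∑ b, (∑ i ∈ s, c i * (u i a * v i b)) * x b
      = ∑ b : Fin n, ∑ i ∈ s, c i * (u i a * v i b) * x b :=
        Finset.sum_congr rfl fun b _ => Finset.sum_mul _ _ _
    _ = ∑ i ∈ s, ∑ b : Fin n, c i * (u i a * v i b) * x b := Finset.sum_comm
    _ = ∑ i ∈ s, (c i * ∑ b, v i b * x b) * u i a := by
        refine Finset.sum_congr rfl fun i _ => ?_
        rw [Finset.mul_sum, Finset.sum_mul]
        exact Finset.sum_congr rfl fun b _ => by ring

lemma range_weighted_le {m n r : ℕ} (u : Fin r → Fin m → K) (v : Fin r → Fin n → K)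
    (s : Finset (Fin r)) (c : Fin r → K) :
    LinearMap.range (Matrix.of fun a b => ∑ i ∈ s, c i * (u i a * v i b)).mulVecLin
      ≤ Submodule.span K (u '' s) := by
  rintro y ⟨x, rfl⟩
  rw [Matrix.mulVecLin_apply, mulVec_weighted]
  exact Submodule.sum_mem _ fun i hi =>
    Submodule.smul_mem _ _ (Submodule.subset_span ⟨i, hi, rfl⟩)

lemma range_weighted_sum {m n r : ℕ} {u : Fin r → Fin m → K} {v : Fin r → Fin n → K}
    (hu : LinearIndependent K u) (hv : LinearIndependent K v)
    (s : Finset (Fin r)) (c : Fin r → K) (hc : ∀ i ∈ s, c i ≠ 0) :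
    LinearMap.range (Matrix.of fun a b => ∑ i ∈ s, c i * (u i a * v i b)).mulVecLin
      = Submodule.span K (u '' s) ∧
    (Matrix.of fun a b => ∑ i ∈ s, c i * (u i a * v i b)).rank = s.card := by
  classical
  set A : Matrix (Fin m) (Fin n) K := Matrix.of fun a b => ∑ i ∈ s, c i * (u i a * v i b) with hA
  obtain ⟨xd, hxd⟩ := exists_dual_family hv
  have hmv : ∀ x : Fin n → K, A.mulVec x = ∑ i ∈ s, (c i * ∑ b, v i b * x b) • u i :=
    fun x => mulVec_weighted u v s c x
  have hrange : LinearMap.range A.mulVecLin = Submodule.span K (u '' s) := by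
    apply le_antisymm
    · exact range_weighted_le u v s c
    · rw [Submodule.span_le]
      rintro y ⟨i, hi, rfl⟩
      have h1 : A.mulVec ((c i)⁻¹ • xd i) = u i := by
        rw [hmv]
        have h2 : ∀ j ∈ s, (c j * ∑ b, v j b * ((c i)⁻¹ • xd i) b) • u j
            = if j = i then u j else 0 := by
          intro j hj
          have h3 : ∑ b, v j b * ((c i)⁻¹ • xd i) b = (c i)⁻¹ * (if j = i then 1 else 0) := by
            rw [← hxd j i, Finset.mul_sum]
            refine Finset.sum_congr rfl fun b _ => ?_
            simp only [Pi.smul_apply, smul_eq_mul]; ring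
          rw [h3]
          split
          · rename_i hji
            subst hji
            rw [mul_one, mul_inv_cancel₀ (hc j hj), one_smul]
          · rw [mul_zero, mul_zero, zero_smul]
        rw [Finset.sum_congr rfl h2, Finset.sum_ite_eq' s i (fun j => u j), if_pos (Finset.mem_coe.mp hi)]
      exact ⟨(c i)⁻¹ • xd i, by rw [Matrix.mulVecLin_apply, h1]⟩
  refine ⟨hrange, ?_⟩
  show finrank K (LinearMap.range A.mulVecLin) = s.card
  rw [hrange]
  have : (u '' s : Set (Fin m → K)) = Set.range (fun i : {x // x ∈ s} => u i) :=
    Set.image_eq_range _ _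
  rw [this]
  have h4 : finrank K (span K (Set.range fun i : {x // x ∈ s} => u i)) = Fintype.card {x // x ∈ s} :=
    finrank_span_eq_card (hu.comp _ Subtype.coe_injective)
  rw [h4, Fintype.card_coe]
variable {K : Type*} [Field K]

lemma finrank_finsetSup_le {W : Type*} [AddCommGroup W] [Module K W] [FiniteDimensional K W]
    {ι : Type*} (s : Finset ι) (E : ι → Submodule K W) :
    finrank K ↥(s.sup E) ≤ ∑ ℓ ∈ s, finrank K (E ℓ) := by
  classical
  induction s using Finset.induction_on with
  | empty => simp [finrank_bot]
  | @insert a s ha ih =>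
    rw [Finset.sup_insert, Finset.sum_insert ha]
    have h := Submodule.finrank_sup_add_finrank_inf_eq (E a) (s.sup E)
    have h2 : finrank K ↥(E a ⊔ s.sup E) ≤ finrank K (E a) + finrank K ↥(s.sup E) := by omega
    exact h2.trans (by omega)

lemma mem_finsetSup_exists {W : Type*} [AddCommGroup W] [Module K W]
    {q : ℕ} (E : Fin q → Submodule K W) {x : W} (hx : x ∈ (Finset.univ : Finset (Fin q)).sup E) :
    ∃ y : Fin q → W, (∀ ℓ, y ℓ ∈ E ℓ) ∧ x = ∑ ℓ, y ℓ := by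
  classical
  rw [Finset.sup_univ_eq_iSup] at hx
  rw [Submodule.mem_iSup_iff_exists_finsupp] at hx
  obtain ⟨f, hf, hsum⟩ := hx
  refine ⟨fun ℓ => f ℓ, fun ℓ => hf ℓ, ?_⟩
  rw [← hsum]
  exact Finsupp.sum_fintype _ _ fun i => rfl

lemma exists_projections {W : Type*} [AddCommGroup W] [Module K W] [FiniteDimensional K W]
    {q : ℕ} (E : Fin q → Submodule K W)
    (h : finrank K ↥((Finset.univ : Finset (Fin q)).sup E) = ∑ ℓ, finrank K (E ℓ)) (ℓ : Fin q) :
    ∃ P : W →ₗ[K] W, (∀ x ∈ E ℓ, P x = x) ∧ ∀ j, j ≠ ℓ → ∀ x ∈ E j, P x = 0 := by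
  classical
  set G := (Finset.univ.erase ℓ).sup E with hG
  have hsplit : (Finset.univ : Finset (Fin q)).sup E = E ℓ ⊔ G := by
    rw [hG, ← Finset.sup_insert, Finset.insert_erase (Finset.mem_univ ℓ)]
  have hGle : finrank K ↥G ≤ ∑ j ∈ Finset.univ.erase ℓ, finrank K (E j) :=
    finrank_finsetSup_le _ _
  have hsum : finrank K (E ℓ) + ∑ j ∈ Finset.univ.erase ℓ, finrank K (E j)
      = ∑ j, finrank K (E j) := Finset.add_sum_erase _ (fun j => finrank K (E j)) (Finset.mem_univ ℓ)
  have h1 := Submodule.finrank_sup_add_finrank_inf_eq (E ℓ) G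
  have hinf0 : finrank K ↥(E ℓ ⊓ G) = 0 := by
    rw [hsplit] at h
    omega
  have hdisj : E ℓ ⊓ G = ⊥ := Submodule.finrank_eq_zero.mp hinf0
  obtain ⟨D, hD⟩ := Submodule.exists_isCompl (E ℓ ⊔ G)
  have hcompl : IsCompl (E ℓ) (G ⊔ D) := by
    constructor
    · rw [disjoint_iff, eq_bot_iff]
      rintro x hx
      obtain ⟨hxE, hxC⟩ := Submodule.mem_inf.mp hx
      obtain ⟨g, hg, d, hd, rfl⟩ := Submodule.mem_sup.mp hxC
      have hd0 : d = 0 := by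
        have hmem : d ∈ E ℓ ⊔ G := by
          have : d = (g + d) - g := by abel
          rw [this]
          exact Submodule.sub_mem _ (Submodule.mem_sup_left hxE) (Submodule.mem_sup_right hg)
        exact Submodule.disjoint_def.mp hD.disjoint d hmem hd
      rw [hd0, add_zero] at hxE ⊢
      have : g ∈ E ℓ ⊓ G := Submodule.mem_inf.mpr ⟨hxE, hg⟩
      rw [hdisj] at this
      exact this
    · rw [codisjoint_iff, ← sup_assoc, codisjoint_iff.mp hD.codisjoint]
  refine ⟨(E ℓ).subtype.comp ((E ℓ).projectionOnto _ hcompl), ?_, ?_⟩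
  · intro x hx
    have := Submodule.projectionOnto_apply_left hcompl ⟨x, hx⟩
    simp [this]
  · intro j hj x hx
    have hEG : E j ≤ G := Finset.le_sup (Finset.mem_erase.mpr ⟨hj, Finset.mem_univ j⟩)
    have hxC : x ∈ G ⊔ D := Submodule.mem_sup_left (hEG hx)
    have := Submodule.projectionOnto_apply_of_mem_right hcompl hxC
    simp [this]
lemma key_lemma {m n p r q : ℕ} [Infinite K]
    {u : Fin r → Fin m → K} {v : Fin r → Fin n → K} {w : Fin r → Fin p → K}
    (hu : LinearIndependent K u) (hv : LinearIndependent K v) (hw : ∀ i, w i ≠ 0)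
    {N : Fin q → Matrix (Fin m) (Fin n) K} {δ : Fin q → Fin p → K}
    (hN0 : ∀ ℓ, N ℓ ≠ 0) (hδ0 : ∀ ℓ, δ ℓ ≠ 0)
    (hδnc : ∀ ℓ ℓ', ℓ ≠ ℓ' → ∀ c : K, δ ℓ' ≠ c • δ ℓ)
    (heq : ∀ a b c, ∑ i, u i a * v i b * w i c = ∑ ℓ, N ℓ a b * δ ℓ c)
    (hrank : ∑ ℓ, (N ℓ).rank = r) :
    ∃ σ : Fin r → Fin q, Function.Surjective σ ∧
      (∀ i j, σ i = σ j ↔ ∃ c : K, w j = c • w i) ∧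
      ∀ ℓ a b c, N ℓ a b * δ ℓ c
        = ∑ i ∈ Finset.univ.filter (fun i => σ i = ℓ), u i a * v i b * w i c := by
  classical
  obtain ⟨xd, hxd⟩ := exists_dual_family hv
  -- contraction identity, pointwise in φ
  have contr : ∀ (φ : Fin p → K) a b,
      ∑ i, (∑ c, w i c * φ c) * (u i a * v i b) = ∑ ℓ, (∑ c, δ ℓ c * φ c) * N ℓ a b := by
    intro φ a b
    calc ∑ i, (∑ c, w i c * φ c) * (u i a * v i b)
        = ∑ i, ∑ c, (u i a * v i b * w i c) * φ c := by
          refine Finset.sum_congr rfl fun i _ => ?_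
          rw [Finset.sum_mul]
          exact Finset.sum_congr rfl fun c _ => by ring
      _ = ∑ c, ∑ i, (u i a * v i b * w i c) * φ c := Finset.sum_comm
      _ = ∑ c, (∑ i, u i a * v i b * w i c) * φ c :=
          Finset.sum_congr rfl fun c _ => (Finset.sum_mul _ _ _).symm
      _ = ∑ c, (∑ ℓ, N ℓ a b * δ ℓ c) * φ c := by
          refine Finset.sum_congr rfl fun c _ => ?_; rw [heq]
      _ = ∑ c, ∑ ℓ, (N ℓ a b * δ ℓ c) * φ c :=
          Finset.sum_congr rfl fun c _ => Finset.sum_mul _ _ _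
      _ = ∑ ℓ, ∑ c, (N ℓ a b * δ ℓ c) * φ c := Finset.sum_comm
      _ = ∑ ℓ, (∑ c, δ ℓ c * φ c) * N ℓ a b := by
          refine Finset.sum_congr rfl fun ℓ _ => ?_
          rw [Finset.sum_mul]
          exact Finset.sum_congr rfl fun c _ => by ring
  set nn : Fin r → Fin q → Fin m → K := fun i ℓ => (N ℓ).mulVec (xd i) with hnn
  have hnnval : ∀ i ℓ a, nn i ℓ a = ∑ b, N ℓ a b * xd i b := by
    intro i ℓ a; simp [hnn, Matrix.mulVec, dotProduct]
  have hnnE : ∀ i ℓ, nn i ℓ ∈ LinearMap.range (N ℓ).mulVecLin := fun i ℓ => ⟨xd i, rfl⟩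
  -- slice identity
  have slice : ∀ i (c : Fin p), w i c • u i = ∑ ℓ, δ ℓ c • nn i ℓ := by
    intro i c
    funext a
    rw [Finset.sum_apply]
    simp only [Pi.smul_apply, smul_eq_mul]
    calc w i c * u i a
        = ∑ j, (u j a * w j c) * (∑ b, v j b * xd i b) := by
          simp only [hxd, mul_ite, mul_one, mul_zero]
          rw [Finset.sum_ite_eq' Finset.univ i (fun j => u j a * w j c),
            if_pos (Finset.mem_univ i)]
          ring
      _ = ∑ j, ∑ b, (u j a * v j b * w j c) * xd i b := by
          refine Finset.sum_congr rfl fun j _ => ?_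
          rw [Finset.mul_sum]
          exact Finset.sum_congr rfl fun b _ => by ring
      _ = ∑ b, ∑ j, (u j a * v j b * w j c) * xd i b := Finset.sum_comm
      _ = ∑ b, (∑ j, u j a * v j b * w j c) * xd i b :=
          Finset.sum_congr rfl fun b _ => (Finset.sum_mul _ _ _).symm
      _ = ∑ b, (∑ ℓ, N ℓ a b * δ ℓ c) * xd i b :=
          Finset.sum_congr rfl fun b _ => by rw [heq]
      _ = ∑ b, ∑ ℓ, (N ℓ a b * δ ℓ c) * xd i b :=
          Finset.sum_congr rfl fun b _ => Finset.sum_mul _ _ _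
      _ = ∑ ℓ, ∑ b, (N ℓ a b * δ ℓ c) * xd i b := Finset.sum_comm
      _ = ∑ ℓ, δ ℓ c * nn i ℓ a := by
          refine Finset.sum_congr rfl fun ℓ _ => ?_
          rw [hnnval, Finset.mul_sum]
          exact Finset.sum_congr rfl fun b _ => by ring
  -- generic functional
  obtain ⟨φ₀, hφ₀⟩ := exists_good_functional (Sum.elim w δ) (by
    rintro (i | ℓ)
    · exact hw i
    · exact hδ0 ℓ)
  have hwφ : ∀ i, (∑ c, w i c * φ₀ c) ≠ 0 := fun i => hφ₀ (Sum.inl i)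
  have hδφ : ∀ ℓ, (∑ c, δ ℓ c * φ₀ c) ≠ 0 := fun ℓ => hφ₀ (Sum.inr ℓ)
  -- contracted matrices
  set A₀ : Matrix (Fin m) (Fin n) K :=
    Matrix.of fun a b => ∑ i, (∑ c, w i c * φ₀ c) * (u i a * v i b) with hA₀
  set A₀' : Matrix (Fin n) (Fin m) K :=
    Matrix.of fun b a => ∑ i, (∑ c, w i c * φ₀ c) * (v i b * u i a) with hA₀'
  obtain ⟨hA₀range, -⟩ :=
    range_weighted_sum hu hv Finset.univ (fun i => ∑ c, w i c * φ₀ c)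
      (fun i _ => hwφ i)
  obtain ⟨hA₀'range, -⟩ :=
    range_weighted_sum hv hu Finset.univ (fun i => ∑ c, w i c * φ₀ c)
      (fun i _ => hwφ i)
  rw [Finset.coe_univ, Set.image_univ] at hA₀range hA₀'range
  set E : Fin q → Submodule K (Fin m → K) := fun ℓ => LinearMap.range (N ℓ).mulVecLin with hE
  set E' : Fin q → Submodule K (Fin n → K) :=
    fun ℓ => LinearMap.range ((N ℓ)ᵀ).mulVecLin with hE'
  -- A₀ mulVec decomposition
  have hA₀mv : ∀ x : Fin n → K,
      A₀ *ᵥ x = ∑ ℓ, (∑ c, δ ℓ c * φ₀ c) • ((N ℓ) *ᵥ x) := by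
    intro x
    funext a
    rw [Finset.sum_apply]
    simp only [Pi.smul_apply, smul_eq_mul]
    calc (A₀ *ᵥ x) a = ∑ b, (∑ ℓ, (∑ c, δ ℓ c * φ₀ c) * N ℓ a b) * x b := by
          simp only [Matrix.mulVec, dotProduct, hA₀, Matrix.of_apply]
          exact Finset.sum_congr rfl fun b _ => by rw [contr φ₀ a b]
      _ = ∑ b, ∑ ℓ, ((∑ c, δ ℓ c * φ₀ c) * N ℓ a b) * x b :=
          Finset.sum_congr rfl fun b _ => Finset.sum_mul _ _ _
      _ = ∑ ℓ, ∑ b, ((∑ c, δ ℓ c * φ₀ c) * N ℓ a b) * x b := Finset.sum_comm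
      _ = ∑ ℓ, (∑ c, δ ℓ c * φ₀ c) * ((N ℓ) *ᵥ x) a := by
          refine Finset.sum_congr rfl fun ℓ _ => ?_
          simp only [Matrix.mulVec, dotProduct, Finset.mul_sum]
          exact Finset.sum_congr rfl fun b _ => by ring
  have hA₀'mv : ∀ x : Fin m → K,
      A₀' *ᵥ x = ∑ ℓ, (∑ c, δ ℓ c * φ₀ c) • (((N ℓ)ᵀ) *ᵥ x) := by
    intro x
    funext b
    rw [Finset.sum_apply]
    simp only [Pi.smul_apply, smul_eq_mul]
    calc (A₀' *ᵥ x) b = ∑ a, (∑ ℓ, (∑ c, δ ℓ c * φ₀ c) * N ℓ a b) * x a := by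
          simp only [Matrix.mulVec, dotProduct, hA₀', Matrix.of_apply]
          refine Finset.sum_congr rfl fun a _ => ?_
          rw [← contr φ₀ a b]
          congr 1
          exact Finset.sum_congr rfl fun i _ => by ring
      _ = ∑ a, ∑ ℓ, ((∑ c, δ ℓ c * φ₀ c) * N ℓ a b) * x a :=
          Finset.sum_congr rfl fun a _ => Finset.sum_mul _ _ _
      _ = ∑ ℓ, ∑ a, ((∑ c, δ ℓ c * φ₀ c) * N ℓ a b) * x a := Finset.sum_comm
      _ = ∑ ℓ, (∑ c, δ ℓ c * φ₀ c) * (((N ℓ)ᵀ) *ᵥ x) b := by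
          refine Finset.sum_congr rfl fun ℓ _ => ?_
          simp only [Matrix.mulVec, dotProduct, Matrix.transpose_apply, Finset.mul_sum]
          exact Finset.sum_congr rfl fun a _ => by ring
  -- column side
  have hA₀le : LinearMap.range A₀.mulVecLin ≤ Finset.univ.sup E := by
    rintro y ⟨x, rfl⟩
    rw [Matrix.mulVecLin_apply, hA₀mv]
    refine Submodule.sum_mem _ fun ℓ _ => ?_
    have hle : E ℓ ≤ Finset.univ.sup E := Finset.le_sup (Finset.mem_univ ℓ)
    exact hle (Submodule.smul_mem _ _ ⟨x, rfl⟩)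
  have hspan_le : Submodule.span K (Set.range u) ≤ Finset.univ.sup E := by
    rw [← hA₀range]; exact hA₀le
  have hfinsum : ∑ ℓ, finrank K (E ℓ) = r := hrank
  have hfinsup_le : finrank K ↥(Finset.univ.sup E) ≤ r := by
    refine (finrank_finsetSup_le _ _).trans ?_
    rw [hfinsum]
  have hspan_finrank : finrank K (Submodule.span K (Set.range u)) = r := by
    rw [finrank_span_eq_card hu, Fintype.card_fin]
  have hsupEq : Submodule.span K (Set.range u) = Finset.univ.sup E :=
    Submodule.eq_of_le_of_finrank_le hspan_le (by rw [hspan_finrank]; exact hfinsup_le)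
  have hfinsup : finrank K ↥(Finset.univ.sup E) = ∑ ℓ, finrank K (E ℓ) := by
    rw [← hsupEq, hspan_finrank, hfinsum]
  choose P hP1 hP2 using exists_projections E hfinsup
  -- row side
  have hA₀'le : LinearMap.range A₀'.mulVecLin ≤ Finset.univ.sup E' := by
    rintro y ⟨x, rfl⟩
    rw [Matrix.mulVecLin_apply, hA₀'mv]
    refine Submodule.sum_mem _ fun ℓ _ => ?_
    have hle : E' ℓ ≤ Finset.univ.sup E' := Finset.le_sup (Finset.mem_univ ℓ)
    exact hle (Submodule.smul_mem _ _ ⟨x, rfl⟩)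
  have hspan_le' : Submodule.span K (Set.range v) ≤ Finset.univ.sup E' := by
    rw [← hA₀'range]; exact hA₀'le
  have hfinsum' : ∑ ℓ, finrank K (E' ℓ) = r := by
    rw [← hrank]
    exact Finset.sum_congr rfl fun ℓ _ => Matrix.rank_transpose (N ℓ)
  have hfinsup_le' : finrank K ↥(Finset.univ.sup E') ≤ r := by
    refine (finrank_finsetSup_le _ _).trans ?_
    rw [hfinsum']
  have hspan_finrank' : finrank K (Submodule.span K (Set.range v)) = r := by
    rw [finrank_span_eq_card hv, Fintype.card_fin]
  have hsupEq' : Submodule.span K (Set.range v) = Finset.univ.sup E' :=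
    Submodule.eq_of_le_of_finrank_le hspan_le' (by rw [hspan_finrank']; exact hfinsup_le')
  have hrow : ∀ ℓ, E' ℓ ≤ Submodule.span K (Set.range v) := by
    intro ℓ; rw [hsupEq']; exact Finset.le_sup (Finset.mem_univ ℓ)
  -- reconstruction of N ℓ from nn
  have hNrec : ∀ ℓ a b, N ℓ a b = ∑ i, nn i ℓ a * v i b := by
    intro ℓ a b
    have hrowmem : (fun b => N ℓ a b) ∈ E' ℓ := by
      refine ⟨Pi.single a 1, ?_⟩
      funext b'
      simp only [Matrix.mulVecLin_apply, Matrix.mulVec, dotProduct,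
        Matrix.transpose_apply, Pi.single_apply, mul_ite, mul_one, mul_zero]
      rw [Finset.sum_ite_eq' Finset.univ a (fun x => N ℓ x b'), if_pos (Finset.mem_univ a)]
    have hmem := hrow ℓ hrowmem
    rw [mem_span_range_iff_exists_fun] at hmem
    obtain ⟨g, hg⟩ := hmem
    have hgb : ∀ b', N ℓ a b' = ∑ j, g j * v j b' := by
      intro b'
      have := congrFun hg b'
      rw [Finset.sum_apply] at this
      simp only [Pi.smul_apply, smul_eq_mul] at this
      exact this.symm
    have hnng : ∀ i, nn i ℓ a = g i := by
      intro i
      calc nn i ℓ a = ∑ b', N ℓ a b' * xd i b' := hnnval i ℓ a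
        _ = ∑ b', (∑ j, g j * v j b') * xd i b' :=
            Finset.sum_congr rfl fun b' _ => by rw [hgb]
        _ = ∑ b', ∑ j, (g j * v j b') * xd i b' :=
            Finset.sum_congr rfl fun b' _ => Finset.sum_mul _ _ _
        _ = ∑ j, ∑ b', (g j * v j b') * xd i b' := Finset.sum_comm
        _ = ∑ j, g j * ∑ b', v j b' * xd i b' := by
            refine Finset.sum_congr rfl fun j _ => ?_
            rw [Finset.mul_sum]
            exact Finset.sum_congr rfl fun b' _ => by ring
        _ = g i := by
            simp only [hxd, mul_ite, mul_one, mul_zero]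
            rw [Finset.sum_ite_eq' Finset.univ i (fun j => g j), if_pos (Finset.mem_univ i)]
    rw [hgb b]
    exact Finset.sum_congr rfl fun i _ => by rw [hnng]
  -- projected slice identity
  have key2 : ∀ i ℓ (c : Fin p), w i c • P ℓ (u i) = δ ℓ c • nn i ℓ := by
    intro i ℓ c
    have h1 := congrArg (P ℓ) (slice i c)
    rw [_root_.map_smul, map_sum] at h1
    have h2 : ∀ ℓ' ∈ Finset.univ, P ℓ (δ ℓ' c • nn i ℓ')
        = if ℓ' = ℓ then δ ℓ c • nn i ℓ else 0 := by
      intro ℓ' _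
      by_cases hℓ' : ℓ' = ℓ
      · subst hℓ'
        rw [if_pos rfl, _root_.map_smul, hP1 ℓ' _ (hnnE i ℓ')]
      · rw [if_neg hℓ', _root_.map_smul, hP2 ℓ ℓ' hℓ' _ (hnnE i ℓ'), smul_zero]
    rw [Finset.sum_congr rfl h2,
      Finset.sum_ite_eq' Finset.univ ℓ (fun _ => δ ℓ c • nn i ℓ),
      if_pos (Finset.mem_univ ℓ)] at h1
    exact h1
  -- sum of projections is identity on span u
  have usum : ∀ i, u i = ∑ ℓ, P ℓ (u i) := by
    intro i
    have hui : u i ∈ Finset.univ.sup E := by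
      rw [← hsupEq]
      exact Submodule.subset_span (Set.mem_range_self i)
    obtain ⟨y, hy, hxy⟩ := mem_finsetSup_exists E hui
    have hPy : ∀ j, P j (u i) = y j := by
      intro j
      rw [hxy, map_sum]
      rw [Finset.sum_eq_single j (fun ℓ _ hℓ => hP2 j ℓ hℓ _ (hy ℓ))
        (fun h => absurd (Finset.mem_univ j) h)]
      exact hP1 j _ (hy j)
    calc u i = ∑ ℓ, y ℓ := hxy
      _ = ∑ ℓ, P ℓ (u i) := Finset.sum_congr rfl fun ℓ _ => (hPy ℓ).symm
  -- definition of σ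
  have hex : ∀ i, ∃ ℓ, P ℓ (u i) ≠ 0 := by
    intro i
    by_contra h
    push_neg at h
    apply hu.ne_zero i
    rw [usum i]
    exact Finset.sum_eq_zero fun ℓ _ => h ℓ
  set σ : Fin r → Fin q := fun i => (hex i).choose with hσdef
  have hσ : ∀ i, P (σ i) (u i) ≠ 0 := fun i => (hex i).choose_spec
  -- collinearity
  have hcoll : ∀ i ℓ, P ℓ (u i) ≠ 0 → ∃ e : K, e ≠ 0 ∧ w i = e • δ ℓ := by
    intro i ℓ hPne
    have ha : ∃ a, P ℓ (u i) a ≠ 0 := by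
      by_contra h; push_neg at h; exact hPne (funext h)
    obtain ⟨a, ha⟩ := ha
    have hpt : ∀ c, w i c * P ℓ (u i) a = δ ℓ c * nn i ℓ a := by
      intro c
      have := congrFun (key2 i ℓ c) a
      simpa using this
    obtain ⟨c₀, hc₀⟩ : ∃ c, w i c ≠ 0 := by
      by_contra h; push_neg at h; exact hw i (funext h)
    have hne : δ ℓ c₀ * nn i ℓ a ≠ 0 := by
      rw [← hpt]; exact mul_ne_zero hc₀ ha
    have hnna : nn i ℓ a ≠ 0 := fun h => hne (by rw [h, mul_zero])
    refine ⟨nn i ℓ a / P ℓ (u i) a, div_ne_zero hnna ha, ?_⟩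
    funext c
    rw [Pi.smul_apply, smul_eq_mul]
    field_simp
    linear_combination hpt c
  have honly : ∀ i ℓ, P ℓ (u i) ≠ 0 → ℓ = σ i := by
    intro i ℓ hPne
    by_contra hne
    obtain ⟨e, he, hwe⟩ := hcoll i ℓ hPne
    obtain ⟨e', he', hwe'⟩ := hcoll i (σ i) (hσ i)
    have : δ (σ i) = (e'⁻¹ * e) • δ ℓ := by
      rw [mul_smul, ← hwe, hwe', inv_smul_smul₀ he']
    exact hδnc ℓ (σ i) hne _ this
  have hzero2 : ∀ i ℓ, ℓ ≠ σ i → P ℓ (u i) = 0 := by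
    intro i ℓ hne
    by_contra h
    exact hne (honly i ℓ h)
  have hfix : ∀ i, P (σ i) (u i) = u i := by
    intro i
    conv_rhs => rw [usum i]
    rw [Finset.sum_eq_single (σ i) (fun ℓ _ hℓ => hzero2 i ℓ hℓ)
      (fun h => absurd (Finset.mem_univ _) h)]
  have hnzero : ∀ i ℓ, ℓ ≠ σ i → nn i ℓ = 0 := by
    intro i ℓ hne
    obtain ⟨c₀, hc₀⟩ : ∃ c, δ ℓ c ≠ 0 := by
      by_contra h; push_neg at h; exact hδ0 ℓ (funext h)
    have := key2 i ℓ c₀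
    rw [hzero2 i ℓ hne, smul_zero] at this
    rcases smul_eq_zero.mp this.symm with h | h
    · exact absurd h hc₀
    · exact h
  -- term identity
  have hterm : ∀ ℓ a b c, N ℓ a b * δ ℓ c
      = ∑ i ∈ Finset.univ.filter (fun i => σ i = ℓ), u i a * v i b * w i c := by
    intro ℓ a b c
    rw [Finset.sum_filter]
    calc N ℓ a b * δ ℓ c = (∑ i, nn i ℓ a * v i b) * δ ℓ c := by rw [hNrec]
      _ = ∑ i, nn i ℓ a * v i b * δ ℓ c := Finset.sum_mul _ _ _
      _ = ∑ i, if σ i = ℓ then u i a * v i b * w i c else 0 := by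
          refine Finset.sum_congr rfl fun i _ => ?_
          by_cases hσi : σ i = ℓ
          · rw [if_pos hσi]
            subst hσi
            have := congrFun (key2 i (σ i) c) a
            rw [hfix i] at this
            simp only [Pi.smul_apply, smul_eq_mul] at this
            linear_combination v i b * this.symm
          · rw [if_neg hσi, hnzero i ℓ (fun h => hσi h.symm)]
            simp
  -- surjectivity
  have hsurj : Function.Surjective σ := by
    intro ℓ
    by_contra h
    push_neg at h
    obtain ⟨c₀, hc₀⟩ : ∃ c, δ ℓ c ≠ 0 := by
      by_contra hh; push_neg at hh; exact hδ0 ℓ (funext hh)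
    apply hN0 ℓ
    ext a b
    have := hterm ℓ a b c₀
    rw [Finset.filter_false_of_mem (fun i _ => h i), Finset.sum_empty] at this
    have : N ℓ a b = 0 := by
      rcases mul_eq_zero.mp this with h' | h'
      · exact h'
      · exact absurd h' hc₀
    simpa using this
  -- fibers
  refine ⟨σ, hsurj, ?_, hterm⟩
  intro i j
  obtain ⟨ei, hei, hwi⟩ := hcoll i (σ i) (hσ i)
  obtain ⟨ej, hej, hwj⟩ := hcoll j (σ j) (hσ j)
  constructor
  · intro hσij
    refine ⟨ej * ei⁻¹, ?_⟩
    rw [hwj, ← hσij, hwi, smul_smul, mul_assoc, inv_mul_cancel₀ hei, mul_one]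
  · rintro ⟨c, hc⟩
    by_contra hne
    have hc0 : c ≠ 0 := by
      rintro rfl
      rw [zero_smul] at hc
      exact hw j hc
    have : δ (σ j) = (ej⁻¹ * (c * ei)) • δ (σ i) := by
      rw [mul_smul, mul_smul, ← hwi, ← hc, hwj, inv_smul_smul₀ hej]
    exact hδnc (σ i) (σ j) hne _ this
lemma contract_eq {m n p : ℕ} {ι κ : Type*} [Fintype ι] [Fintype κ]
    (X : ι → Matrix (Fin m) (Fin n) K) (w : ι → Fin p → K)
    (Y : κ → Matrix (Fin m) (Fin n) K) (z : κ → Fin p → K)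
    (heq : ∀ a b c, ∑ i, X i a b * w i c = ∑ j, Y j a b * z j c)
    (φ : Fin p → K) (a : Fin m) (b : Fin n) :
    ∑ i, (∑ c, w i c * φ c) * X i a b = ∑ j, (∑ c, z j c * φ c) * Y j a b := by
  calc ∑ i, (∑ c, w i c * φ c) * X i a b
      = ∑ i, ∑ c, (X i a b * w i c) * φ c := by
        refine Finset.sum_congr rfl fun i _ => ?_
        rw [Finset.sum_mul]
        exact Finset.sum_congr rfl fun c _ => by ring
    _ = ∑ c, ∑ i, (X i a b * w i c) * φ c := Finset.sum_comm
    _ = ∑ c, (∑ i, X i a b * w i c) * φ c :=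
        Finset.sum_congr rfl fun c _ => (Finset.sum_mul _ _ _).symm
    _ = ∑ c, (∑ j, Y j a b * z j c) * φ c :=
        Finset.sum_congr rfl fun c _ => by rw [heq]
    _ = ∑ c, ∑ j, (Y j a b * z j c) * φ c :=
        Finset.sum_congr rfl fun c _ => Finset.sum_mul _ _ _
    _ = ∑ j, ∑ c, (Y j a b * z j c) * φ c := Finset.sum_comm
    _ = ∑ j, (∑ c, z j c * φ c) * Y j a b := by
        refine Finset.sum_congr rfl fun j _ => ?_
        rw [Finset.sum_mul]
        exact Finset.sum_congr rfl fun c _ => by ring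

lemma exists_canonical {m n p r : ℕ}
    {u : Fin r → Fin m → K} {v : Fin r → Fin n → K} {w : Fin r → Fin p → K}
    (hu : LinearIndependent K u) (hv : LinearIndependent K v) (hw : ∀ i, w i ≠ 0) :
    ∃ (q : ℕ) (M : Fin q → Matrix (Fin m) (Fin n) K) (γ : Fin q → Fin p → K),
      (∀ ℓ, M ℓ ≠ 0) ∧ (∀ ℓ, γ ℓ ≠ 0) ∧
      (∀ ℓ ℓ', ℓ ≠ ℓ' → ∀ c : K, γ ℓ' ≠ c • γ ℓ) ∧
      (∀ a b c, ∑ i, u i a * v i b * w i c = ∑ ℓ, M ℓ a b * γ ℓ c) ∧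
      (∑ ℓ, (M ℓ).rank) = r := by
  classical
  set s : Setoid (Fin r) :=
    ⟨fun i j => ∃ c : K, w j = c • w i, by
      constructor
      · exact fun i => ⟨1, (one_smul _ _).symm⟩
      · rintro i j ⟨c, hc⟩
        have hc0 : c ≠ 0 := by
          rintro rfl
          rw [zero_smul] at hc
          exact hw j hc
        exact ⟨c⁻¹, by rw [hc, inv_smul_smul₀ hc0]⟩
      · rintro i j k ⟨c, hc⟩ ⟨d, hd⟩
        exact ⟨d * c, by rw [hd, hc, smul_smul]⟩⟩ with hs
  haveI : DecidableEq (Quotient s) := Classical.decEq _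
  haveI : Fintype (Quotient s) := Quotient.fintype s
  set q := Fintype.card (Quotient s) with hq
  set e : Quotient s ≃ Fin q := Fintype.equivFin (Quotient s) with he
  set cls : Fin r → Fin q := fun i => e (Quotient.mk s i) with hcls
  set rep : Fin q → Fin r := fun ℓ => (e.symm ℓ).out with hrep
  have hclsrep : ∀ ℓ, cls (rep ℓ) = ℓ := by
    intro ℓ
    show e (Quotient.mk s (e.symm ℓ).out) = ℓ
    rw [Quotient.out_eq, Equiv.apply_symm_apply]
  have hrel : ∀ i, ∃ c : K, w i = c • w (rep (cls i)) := by
    intro i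
    have h1 : Quotient.mk s (rep (cls i)) = Quotient.mk s i := by
      show Quotient.mk s (e.symm (e (Quotient.mk s i))).out = _
      rw [Quotient.out_eq, Equiv.symm_apply_apply]
    exact Quotient.exact h1
  set coef : Fin r → K := fun i => (hrel i).choose with hcoefdef
  have hcoef : ∀ i, w i = coef i • w (rep (cls i)) := fun i => (hrel i).choose_spec
  have hcoef0 : ∀ i, coef i ≠ 0 := by
    intro i h
    apply hw i
    rw [hcoef i, h, zero_smul]
  set M : Fin q → Matrix (Fin m) (Fin n) K := fun ℓ =>
    Matrix.of fun a b => ∑ i ∈ Finset.univ.filter (fun i => cls i = ℓ),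
      coef i * (u i a * v i b) with hM
  set γ : Fin q → Fin p → K := fun ℓ => w (rep ℓ) with hγ
  have hrank : ∀ ℓ, (M ℓ).rank = (Finset.univ.filter (fun i => cls i = ℓ)).card :=
    fun ℓ => (range_weighted_sum hu hv _ coef (fun i _ => hcoef0 i)).2
  have hranksum : ∑ ℓ, (M ℓ).rank = r := by
    rw [Finset.sum_congr rfl fun ℓ _ => hrank ℓ]
    rw [← Finset.card_eq_sum_card_fiberwise (fun i _ => Finset.mem_univ (cls i))]
    simp
  refine ⟨q, M, γ, ?_, fun ℓ => hw (rep ℓ), ?_, ?_, hranksum⟩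
  · intro ℓ hM0
    have h1 : (M ℓ).rank = 0 := by rw [hM0, Matrix.rank_zero]
    rw [hrank ℓ] at h1
    have h2 : rep ℓ ∈ Finset.univ.filter (fun i => cls i = ℓ) :=
      Finset.mem_filter.mpr ⟨Finset.mem_univ _, hclsrep ℓ⟩
    have := Finset.card_pos.mpr ⟨rep ℓ, h2⟩
    omega
  · intro ℓ ℓ' hne c hcol
    apply hne
    have : Quotient.mk s (rep ℓ) = Quotient.mk s (rep ℓ') := Quotient.sound ⟨c, hcol⟩
    rw [hrep] at this
    simp only [Quotient.out_eq] at this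
    exact e.symm.injective this
  · intro a b c
    symm
    calc ∑ ℓ, M ℓ a b * γ ℓ c
        = ∑ ℓ, ∑ i ∈ Finset.univ.filter (fun i => cls i = ℓ),
            u i a * v i b * w i c := by
          refine Finset.sum_congr rfl fun ℓ _ => ?_
          show (∑ i ∈ Finset.univ.filter (fun i => cls i = ℓ),
            coef i * (u i a * v i b)) * w (rep ℓ) c = _
          rw [Finset.sum_mul]
          refine Finset.sum_congr rfl fun i hi => ?_
          have hi' : cls i = ℓ := (Finset.mem_filter.mp hi).2
          rw [← hi']
          have hwc : w i c = coef i * w (rep (cls i)) c := by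
            have := congrFun (hcoef i) c
            simpa using this
          rw [hwc]
          ring
      _ = ∑ i, u i a * v i b * w i c :=
          Finset.sum_fiberwise_of_maps_to (fun i _ => Finset.mem_univ (cls i)) _

end AuxLemmas

open Finset Submodule Module in
theorem uniqueness_theorem_form_one {m n p r : ℕ} [Infinite K]
    (T : Fin m → Fin n → Fin p → K)
    (u : Fin r → Fin m → K) (v : Fin r → Fin n → K) (w : Fin r → Fin p → K)
    (hT : T = fun a b c => ∑ i, u i a * v i b * w i c)
    (hu : LinearIndependent K u) (hv : LinearIndependent K v)
    (hw : ∀ i, w i ≠ 0) :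
    tensorRank T = r ∧
    (∃ (q : ℕ) (M : Fin q → Matrix (Fin m) (Fin n) K) (γ : Fin q → Fin p → K),
      IsMVDecomp T M γ ∧ (∑ ℓ, (M ℓ).rank) = r) ∧
    (∀ (q₁ : ℕ) (M₁ : Fin q₁ → Matrix (Fin m) (Fin n) K) (γ₁ : Fin q₁ → Fin p → K)
       (q₂ : ℕ) (M₂ : Fin q₂ → Matrix (Fin m) (Fin n) K) (γ₂ : Fin q₂ → Fin p → K),
      IsMVDecomp T M₁ γ₁ → (∑ ℓ, (M₁ ℓ).rank) = r →
      IsMVDecomp T M₂ γ₂ → (∑ ℓ, (M₂ ℓ).rank) = r →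
      ∃ π : Fin q₁ ≃ Fin q₂, ∀ ℓ,
        (fun a b c => M₁ ℓ a b * γ₁ ℓ c) =
        (fun a b c => M₂ (π ℓ) a b * γ₂ (π ℓ) c)) := by
  classical
  refine ⟨?_, ?_, ?_⟩
  -- Part 1 : tensorRank T = r
  · obtain ⟨φ, hφ⟩ := exists_good_functional w hw
    apply le_antisymm
    · exact Nat.sInf_le ⟨u, v, w, hT⟩
    · refine le_csInf ⟨r, u, v, w, hT⟩ ?_
      rintro s ⟨x, y, z, hTs⟩
      have heq2 : ∀ a b c, ∑ i, (Matrix.of fun a b => u i a * v i b) a b * w i c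
          = ∑ j, (Matrix.of fun a b => x j a * y j b) a b * z j c := by
        intro a b c
        have h1 := congrFun (congrFun (congrFun (hT.symm.trans hTs) a) b) c
        simpa using h1
      have hAB := fun a b => contract_eq _ w _ z heq2 φ a b
      obtain ⟨-, hArank⟩ := range_weighted_sum hu hv Finset.univ
        (fun i => ∑ c, w i c * φ c) (fun i _ => hφ i)
      have hAB' : (Matrix.of fun a b => ∑ i, (∑ c, w i c * φ c) * (u i a * v i b))
          = Matrix.of fun a b => ∑ j, (∑ c, z j c * φ c) * (x j a * y j b) := by
        ext a b
        exact hAB a b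
      have hBle : (Matrix.of fun a b =>
          ∑ j, (∑ c, z j c * φ c) * (x j a * y j b)).rank ≤ s := by
        show finrank K (LinearMap.range (Matrix.of fun a b =>
          ∑ j, (∑ c, z j c * φ c) * (x j a * y j b)).mulVecLin) ≤ s
        have h1 : LinearMap.range (Matrix.of fun a b =>
            ∑ j ∈ Finset.univ, (∑ c, z j c * φ c) * (x j a * y j b)).mulVecLin
            ≤ Submodule.span K (Set.range x) := by
          have := range_weighted_le x y Finset.univ (fun j => ∑ c, z j c * φ c)
          rwa [Finset.coe_univ, Set.image_univ] at this
        calc finrank K (LinearMap.range (Matrix.of fun a b =>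
              ∑ j, (∑ c, z j c * φ c) * (x j a * y j b)).mulVecLin)
            ≤ finrank K (Submodule.span K (Set.range x)) := Submodule.finrank_mono h1
          _ ≤ Fintype.card (Fin s) := finrank_range_le_card x
          _ = s := Fintype.card_fin s
      calc r = (Finset.univ : Finset (Fin r)).card := by simp
        _ = (Matrix.of fun a b =>
              ∑ i, (∑ c, w i c * φ c) * (u i a * v i b)).rank := hArank.symm
        _ ≤ s := by rw [hAB']; exact hBle
  -- Part 2 : existence
  · obtain ⟨q, M, γ, h1, h2, h3, h4, h5⟩ := exists_canonical hu hv hw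
    refine ⟨q, M, γ, ⟨h1, h2, h3, ?_⟩, h5⟩
    rw [hT]
    funext a b c
    exact h4 a b c
  -- Part 3 : uniqueness
  · rintro q₁ M₁ γ₁ q₂ M₂ γ₂ ⟨hM₁0, hγ₁0, hγ₁nc, hTd₁⟩ hr₁ ⟨hM₂0, hγ₂0, hγ₂nc, hTd₂⟩ hr₂
    have heq₁ : ∀ a b c, ∑ i, u i a * v i b * w i c = ∑ ℓ, M₁ ℓ a b * γ₁ ℓ c := by
      intro a b c
      have := congrFun (congrFun (congrFun (hT.symm.trans hTd₁) a) b) c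
      simpa using this
    have heq₂ : ∀ a b c, ∑ i, u i a * v i b * w i c = ∑ ℓ, M₂ ℓ a b * γ₂ ℓ c := by
      intro a b c
      have := congrFun (congrFun (congrFun (hT.symm.trans hTd₂) a) b) c
      simpa using this
    obtain ⟨σ₁, hσ₁surj, hσ₁fib, hσ₁term⟩ :=
      key_lemma hu hv hw hM₁0 hγ₁0 hγ₁nc heq₁ hr₁
    obtain ⟨σ₂, hσ₂surj, hσ₂fib, hσ₂term⟩ :=
      key_lemma hu hv hw hM₂0 hγ₂0 hγ₂nc heq₂ hr₂
    have hcomm : ∀ i j, σ₁ i = σ₁ j ↔ σ₂ i = σ₂ j :=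
      fun i j => (hσ₁fib i j).trans (hσ₂fib i j).symm
    set f : Fin q₁ → Fin q₂ := fun ℓ => σ₂ (Function.surjInv hσ₁surj ℓ) with hf
    set g : Fin q₂ → Fin q₁ := fun ℓ => σ₁ (Function.surjInv hσ₂surj ℓ) with hg
    have hfg : ∀ ℓ, g (f ℓ) = ℓ := by
      intro ℓ
      have h1 : σ₁ (Function.surjInv hσ₁surj ℓ) = ℓ := Function.surjInv_eq hσ₁surj ℓ
      have h2 : σ₂ (Function.surjInv hσ₂surj (f ℓ)) = f ℓ := Function.surjInv_eq hσ₂surj _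
      have h3 : σ₂ (Function.surjInv hσ₂surj (f ℓ)) = σ₂ (Function.surjInv hσ₁surj ℓ) := h2
      have h4 := (hcomm _ _).mpr h3
      show σ₁ (Function.surjInv hσ₂surj (f ℓ)) = ℓ
      rw [h4, h1]
    have hgf : ∀ ℓ, f (g ℓ) = ℓ := by
      intro ℓ
      have h1 : σ₂ (Function.surjInv hσ₂surj ℓ) = ℓ := Function.surjInv_eq hσ₂surj ℓ
      have h2 : σ₁ (Function.surjInv hσ₁surj (g ℓ)) = g ℓ := Function.surjInv_eq hσ₁surj _
      have h3 : σ₁ (Function.surjInv hσ₁surj (g ℓ)) = σ₁ (Function.surjInv hσ₂surj ℓ) := h2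
      have h4 := (hcomm _ _).mp h3
      show σ₂ (Function.surjInv hσ₁surj (g ℓ)) = ℓ
      rw [h4, h1]
    refine ⟨⟨f, g, hfg, hgf⟩, fun ℓ => ?_⟩
    funext a b c
    have hfiber : Finset.univ.filter (fun i => σ₁ i = ℓ)
        = Finset.univ.filter (fun i => σ₂ i = f ℓ) := by
      ext i
      simp only [Finset.mem_filter, Finset.mem_univ, true_and]
      have h1 : σ₁ (Function.surjInv hσ₁surj ℓ) = ℓ := Function.surjInv_eq hσ₁surj ℓ
      constructor
      · intro h
        have h2 : σ₁ i = σ₁ (Function.surjInv hσ₁surj ℓ) := by rw [h, h1]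
        exact (hcomm _ _).mp h2
      · intro h
        have h2 : σ₂ i = σ₂ (Function.surjInv hσ₁surj ℓ) := h
        have h3 := (hcomm _ _).mpr h2
        rw [h3, h1]
    show M₁ ℓ a b * γ₁ ℓ c = M₂ (f ℓ) a b * γ₂ (f ℓ) c
    rw [hσ₁term ℓ a b c, hσ₂term (f ℓ) a b c, hfiber]
end

section
/- Suppose a tensor T ∈ K^{m×n×p} has a matrix-vector decomposition T = Σ_{ℓ=1}^q M_ℓ ⊗ w'_ℓ where the spaces Im(M_ℓ) are in direct sum and the spaces Im(M_ℓᵀ) are in direct sum. Then T admits a decomposition T = Σ_{i=1}^r uᵢ⊗vᵢ⊗wᵢ with r = Σ_ℓ rank(M_ℓ), the uᵢ linearly independent, the vᵢ linearly independent, every wᵢ nonzero, and each wᵢ ∈ {w'₁,…,w'_q}. -/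
open Matrix BigOperators Polynomial

variable {K : Type*} [Field K]

set_option synthInstance.maxHeartbeats 1000000 in
lemma rank_factorization {m n : ℕ} (M : Matrix (Fin m) (Fin n) K) :
    ∃ (u : Fin M.rank → Fin m → K) (v : Fin M.rank → Fin n → K),
      (∀ a b, M a b = ∑ i, u i a * v i b) ∧
      LinearIndependent K u ∧ LinearIndependent K v ∧
      (∀ i, u i ∈ colSpace M) ∧ (∀ i, v i ∈ colSpace Mᵀ) := by
  classical
  set E : Submodule K (Fin m → K) := LinearMap.range M.mulVecLin with hE
  have hrk : M.rank = Module.finrank K E := rfl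
  let bE : Module.Basis (Fin M.rank) K E :=
    Module.finBasisOfFinrankEq K E hrk.symm
  -- columns of M as elements of E
  have hcolmem : ∀ b : Fin n, (fun a => M a b) ∈ E := by
    intro b
    refine ⟨Pi.single b 1, ?_⟩
    ext a
    simp [Matrix.mulVecLin, Matrix.mulVec, dotProduct, Pi.single_apply]
  let col : Fin n → E := fun b => ⟨fun a => M a b, hcolmem b⟩
  let u : Fin M.rank → Fin m → K := fun i => (bE i : Fin m → K)
  let v : Fin M.rank → Fin n → K := fun i b => bE.repr (col b) i
  have hfact : ∀ a b, M a b = ∑ i, u i a * v i b := by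
    intro a b
    have h := bE.sum_repr (col b)
    have h2 : ((∑ i, bE.repr (col b) i • bE i : E) : Fin m → K) a = M a b := by
      rw [h]
    rw [← h2]
    simp [u, v, mul_comm, -Module.Basis.sum_repr]
  have hu : LinearIndependent K u := by
    exact bE.linearIndependent.map' E.subtype (Submodule.ker_subtype E)
  have humem : ∀ i, u i ∈ E := fun i => (bE i).2
  -- every element of E is a lin comb of columns
  have hspanE : ∀ x : E, ∃ y : Fin n → K, x = ∑ b, y b • col b := by
    rintro ⟨x, y, rfl⟩
    refine ⟨y, ?_⟩
    ext a
    simp only [Submodule.coe_sum, Submodule.coe_smul, col]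
    simp [Matrix.mulVecLin, Matrix.mulVec, dotProduct, Finset.sum_apply, mul_comm]
  have hv : LinearIndependent K v := by
    rw [Fintype.linearIndependent_iff]
    intro g hg j
    -- functional φ x = ∑ i, g i * repr x i vanishes on columns
    have hφcol : ∀ b, ∑ i, g i * bE.repr (col b) i = 0 := by
      intro b
      have := congrFun hg b
      simpa [v, Finset.sum_apply] using this
    have hφ : ∀ x : E, ∑ i, g i * bE.repr x i = 0 := by
      intro x
      obtain ⟨y, rfl⟩ := hspanE x
      have hrep : ∀ i, bE.repr (∑ b, y b • col b) i = ∑ b, y b * bE.repr (col b) i := by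
        intro i
        simp only [map_sum, _root_.map_smul, Finsupp.coe_finset_sum, Finset.sum_apply,
          Finsupp.coe_smul, Pi.smul_apply, smul_eq_mul]
      calc ∑ i, g i * bE.repr (∑ b, y b • col b) i
          = ∑ i, ∑ b, y b * (g i * bE.repr (col b) i) := by
            refine Finset.sum_congr rfl fun i _ => ?_
            rw [hrep, Finset.mul_sum]
            exact Finset.sum_congr rfl fun b _ => by ring
        _ = ∑ b, y b * ∑ i, g i * bE.repr (col b) i := by
            rw [Finset.sum_comm]
            exact Finset.sum_congr rfl fun b _ => by rw [Finset.mul_sum]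
        _ = 0 := by simp [hφcol]
    have := hφ (bE j)
    simpa [Module.Basis.repr_self, Finsupp.single_apply] using this
  -- rows of M lie in span of v
  have hrowspan : ∀ a, (M a : Fin n → K) ∈ Submodule.span K (Set.range v) := by
    intro a
    have : (M a : Fin n → K) = ∑ i, u i a • v i := by
      ext b; simp [hfact a b, Finset.sum_apply]
    rw [this]
    exact Submodule.sum_mem _ fun i _ =>
      Submodule.smul_mem _ _ (Submodule.subset_span ⟨i, rfl⟩)
  have hEt : colSpace Mᵀ = Submodule.span K (Set.range M) := by
    rw [colSpace, Matrix.range_mulVecLin]; rfl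
  have hle : colSpace Mᵀ ≤ Submodule.span K (Set.range v) := by
    rw [hEt, Submodule.span_le]
    rintro _ ⟨a, rfl⟩
    exact hrowspan a
  have hfr1 : Module.finrank K (Submodule.span K (Set.range v)) = M.rank := by
    rw [finrank_span_eq_card hv, Fintype.card_fin]
  have hfr2 : Module.finrank K (colSpace Mᵀ) = M.rank := by
    have : Mᵀ.rank = M.rank := Matrix.rank_transpose M
    rw [← this]; rfl
  have heq : colSpace Mᵀ = Submodule.span K (Set.range v) := by
    apply Submodule.eq_of_le_of_finrank_le hle
    rw [hfr1, hfr2]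
  have hvmem : ∀ i, v i ∈ colSpace Mᵀ := by
    intro i
    rw [heq]
    exact Submodule.subset_span ⟨i, rfl⟩
  exact ⟨u, v, hfact, hu, hv, humem, hvmem⟩

theorem mv_decomp_to_rank_one_decomp {m n p q : ℕ}
    (T : Fin m → Fin n → Fin p → K)
    (M : Fin q → Matrix (Fin m) (Fin n) K) (w' : Fin q → Fin p → K)
    (hdec : IsMVDecomp T M w')
    (hcol : DirectSumFamily (fun ℓ => colSpace (M ℓ)))
    (hrow : DirectSumFamily (fun ℓ => colSpace (M ℓ)ᵀ)) :
    ∃ (r : ℕ) (u : Fin r → Fin m → K) (v : Fin r → Fin n → K) (w : Fin r → Fin p → K),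
      r = (∑ ℓ, (M ℓ).rank) ∧
      T = (fun a b c => ∑ i, u i a * v i b * w i c) ∧
      LinearIndependent K u ∧ LinearIndependent K v ∧
      (∀ i, w i ≠ 0) ∧ (∀ i, ∃ ℓ, w i = w' ℓ) := by
  classical
  obtain ⟨hM0, hw0, hwnc, hT⟩ := hdec
  choose U V hfact hU hV hUmem hVmem using fun ℓ => rank_factorization (M ℓ)
  set r : ℕ := ∑ ℓ, (M ℓ).rank with hr
  have hcard : Fintype.card (Σ ℓ : Fin q, Fin ((M ℓ).rank)) = r := by
    simp [Fintype.card_sigma, hr]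
  let e : (Σ ℓ : Fin q, Fin ((M ℓ).rank)) ≃ Fin r := Fintype.equivFinOfCardEq hcard
  refine ⟨r, fun i => U (e.symm i).1 (e.symm i).2, fun i => V (e.symm i).1 (e.symm i).2,
    fun i => w' (e.symm i).1, rfl, ?_, ?_, ?_, ?_, ?_⟩
  · rw [hT]
    funext a b c
    rw [Fintype.sum_equiv e.symm
      (fun i => U (e.symm i).1 (e.symm i).2 a * V (e.symm i).1 (e.symm i).2 b * w' (e.symm i).1 c)
      (fun x => U x.1 x.2 a * V x.1 x.2 b * w' x.1 c) (fun i => rfl)]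
    rw [← Finset.univ_sigma_univ, Finset.sum_sigma]
    refine Finset.sum_congr rfl fun ℓ _ => ?_
    rw [hfact ℓ a b, Finset.sum_mul]
  · rw [Fintype.linearIndependent_iff]
    intro g hg i0
    set g' : (ℓ : Fin q) → Fin ((M ℓ).rank) → K := fun ℓ i => g (e ⟨ℓ, i⟩) with hg'
    have hsum : ∑ ℓ, (∑ i, g' ℓ i • U ℓ i) = 0 := by
      rw [← hg, Fintype.sum_equiv e.symm
        (fun j => g j • U (e.symm j).1 (e.symm j).2)
        (fun x => g' x.1 x.2 • U x.1 x.2) (fun j => by simp [hg', Sigma.eta]),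
        ← Finset.univ_sigma_univ, Finset.sum_sigma]
    have hzero : ∀ ℓ, (∑ i, g' ℓ i • U ℓ i) = 0 :=
      hcol _ (fun ℓ => Submodule.sum_mem _ fun i _ =>
        Submodule.smul_mem _ _ (hUmem ℓ i)) hsum
    have : ∀ ℓ i, g' ℓ i = 0 := fun ℓ =>
      Fintype.linearIndependent_iff.mp (hU ℓ) (g' ℓ) (hzero ℓ)
    have := this (e.symm i0).1 (e.symm i0).2
    simpa [hg'] using this
  · rw [Fintype.linearIndependent_iff]
    intro g hg i0
    set g' : (ℓ : Fin q) → Fin ((M ℓ).rank) → K := fun ℓ i => g (e ⟨ℓ, i⟩) with hg'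
    have hsum : ∑ ℓ, (∑ i, g' ℓ i • V ℓ i) = 0 := by
      rw [← hg, Fintype.sum_equiv e.symm
        (fun j => g j • V (e.symm j).1 (e.symm j).2)
        (fun x => g' x.1 x.2 • V x.1 x.2) (fun j => by simp [hg', Sigma.eta]),
        ← Finset.univ_sigma_univ, Finset.sum_sigma]
    have hzero : ∀ ℓ, (∑ i, g' ℓ i • V ℓ i) = 0 :=
      hrow _ (fun ℓ => Submodule.sum_mem _ fun i _ =>
        Submodule.smul_mem _ _ (hVmem ℓ i)) hsum
    have : ∀ ℓ i, g' ℓ i = 0 := fun ℓ =>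
      Fintype.linearIndependent_iff.mp (hV ℓ) (g' ℓ) (hzero ℓ)
    have := this (e.symm i0).1 (e.symm i0).2
    simpa [hg'] using this
  · exact fun i => hw0 _
  · exact fun i => ⟨(e.symm i).1, rfl⟩
end
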